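/- Let G be a finite group, φ an automorphism of G, and form the semidirect product G⋊⟨φ⟩. Let H ≤ G be a subgroup and g ∈ G an element such that the map h ↦ gφ(h)g⁻¹ maps H to H. Let χ̃ be an irreducible character of H⋊⟨ι_g∘φ⟩ whose restriction χ to H is irreducible, and let ρ̃ be an irreducible character of G⋊⟨φ⟩ whose restriction ρ to G is irreducible. Then the absolute value of the inner product over the coset G.φ of ρ̃ with the coset induction Ind_{H.gφ}^{G.φ}(χ̃) is at most ⟨ρ, Ind_H^G(χ)⟩_G. In particular, if the former is nonzero then ⟨ρ, Ind_H^G(χ)⟩_G ≠ 0. -/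

import Mathlib

open scoped BigOperators Classical

/-- `f : Γ → ℂ` is an irreducible character of the group `Γ`: the character of some
simple (finite-dimensional) representation. -/
def IsIrrChar (Γ : Type) [Group Γ] (f : Γ → ℂ) : Prop :=
  ∃ V : FDRep ℂ Γ, CategoryTheory.Simple V ∧ f = FDRep.character V


open Module Polynomial in
lemma key_end {V : Type} [AddCommGroup V] [Module ℂ V] [FiniteDimensional ℂ V]
    (f : Module.End ℂ V) (n : ℕ) (hn : 0 < n) (hf : f ^ (n + 1) = f) :
    ‖LinearMap.trace ℂ V f‖ ≤ (LinearMap.trace ℂ V (f ^ n)).re ∧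
      (LinearMap.trace ℂ V f ≠ 0 → LinearMap.trace ℂ V (f ^ n) ≠ 0) := by
  -- the polynomial X^(n+1) - X
  set p : ℂ[X] := X ^ (n + 1) - X with hpdef
  have hp0 : p ≠ 0 := by
    intro h
    have h1 := congrArg (fun q : ℂ[X] => q.coeff 1) h
    simp only [hpdef, coeff_sub, coeff_X_pow, coeff_X_one, coeff_zero] at h1
    rcases Nat.eq_or_lt_of_le hn with h' | h'
    · simp [← h'] at h1
    · rw [if_neg (by omega)] at h1
      norm_num at h1
  have hsq : Squarefree p := by
    have hfact : p = X * (X ^ n - 1) := by ring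
    have h1 : (X : ℂ[X]).Separable := separable_X
    have h2 : (X ^ n - 1 : ℂ[X]).Separable := by
      have := Polynomial.separable_X_pow_sub_C (1 : ℂ)
        (Nat.cast_ne_zero.mpr hn.ne' : (n : ℂ) ≠ 0) one_ne_zero
      simpa using this
    have hco : IsCoprime (X : ℂ[X]) (X ^ n - 1) :=
      ⟨X ^ (n - 1), -1, by
        rw [← pow_succ, Nat.sub_add_cancel hn]; ring⟩
    rw [hfact]
    exact (h1.mul h2 hco).squarefree
  have hav : aeval f p = 0 := by
    simp [hpdef, map_sub, map_pow, hf, sub_self]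
  have hss : f.IsSemisimple := Module.End.isSemisimple_of_squarefree_aeval_eq_zero hsq hav
  have hfss : f.IsFinitelySemisimple := hss.isFinitelySemisimple
  set N : ℂ → Submodule ℂ V := fun μ => f.eigenspace μ with hNdef
  have hpow : ∀ (k : ℕ) (μ : ℂ) (x : V), x ∈ N μ → (f ^ k) x = μ ^ k • x := by
    intro k
    induction k with
    | zero => intro μ x _; simp
    | succ k ih =>
      intro μ x hx
      have hx' : f x = μ • x := Module.End.mem_eigenspace_iff.mp hx
      rw [pow_succ, Module.End.mul_apply, hx', map_smul, ih μ x hx, smul_smul, pow_succ']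
  have hroot : ∀ μ : ℂ, N μ ≠ ⊥ → μ ^ (n + 1) = μ := by
    intro μ hμ
    obtain ⟨x, hx, hx0⟩ := (Submodule.ne_bot_iff _).mp hμ
    have e1 : (f ^ (n + 1)) x = μ ^ (n + 1) • x := hpow (n + 1) μ x hx
    rw [hf, Module.End.mem_eigenspace_iff.mp hx] at e1
    have : (μ ^ (n + 1) - μ) • x = 0 := by rw [sub_smul, ← e1, sub_self]
    rcases smul_eq_zero.mp this with h | h
    · exact sub_eq_zero.mp h
    · exact absurd h hx0
  have hdich : ∀ μ : ℂ, N μ ≠ ⊥ → μ = 0 ∨ μ ^ n = 1 := by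
    intro μ hμ
    have h := hroot μ hμ
    have : μ * (μ ^ n - 1) = 0 := by linear_combination h
    rcases mul_eq_zero.mp this with h' | h'
    · exact Or.inl h'
    · exact Or.inr (sub_eq_zero.mp h')
  have hfin : {μ | N μ ≠ ⊥}.Finite := by
    apply (Polynomial.finite_setOf_isRoot hp0).subset
    intro μ hμ
    simp only [Set.mem_setOf_eq, hpdef, Polynomial.IsRoot, Polynomial.eval_sub,
      Polynomial.eval_pow, Polynomial.eval_X]
    rw [hroot μ hμ, sub_self]
  have htop : ⨆ μ, N μ = ⊤ := by
    have h := Module.End.iSup_maxGenEigenspace_eq_top f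
    simpa only [hfss.maxGenEigenspace_eq_eigenspace] using h
  have hint : DirectSum.IsInternal N :=
    DirectSum.isInternal_submodule_of_iSupIndep_of_iSup_eq_top f.eigenspaces_iSupIndep htop
  have hmapsTo : ∀ (k : ℕ) (μ : ℂ), Set.MapsTo (f ^ k) (N μ) (N μ) := by
    intro k μ x hx
    show (f ^ k) x ∈ N μ
    rw [hpow k μ x hx]
    exact (N μ).smul_mem _ hx
  have htr : ∀ k : ℕ, LinearMap.trace ℂ V (f ^ k) =
      ∑ μ ∈ hfin.toFinset, μ ^ k * (Module.finrank ℂ (N μ) : ℂ) := by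
    intro k
    rw [LinearMap.trace_eq_sum_trace_restrict' hint hfin (hmapsTo k)]
    refine Finset.sum_congr rfl fun μ _ => ?_
    have : (f ^ k).restrict (hmapsTo k μ) = (μ ^ k : ℂ) • LinearMap.id := by
      ext ⟨x, hx⟩
      simp only [LinearMap.restrict_coe_apply, LinearMap.smul_apply, LinearMap.id_apply]
      exact hpow k μ x hx
    rw [this, map_smul, LinearMap.trace_id, smul_eq_mul]
  have e1 := htr 1
  rw [pow_one] at e1
  simp only [pow_one] at e1
  have en := htr n
  have key1 : ‖LinearMap.trace ℂ V f‖ ≤ (LinearMap.trace ℂ V (f ^ n)).re := by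
    rw [e1, en, Complex.re_sum]
    refine le_trans (norm_sum_le _ _) (le_of_eq (Finset.sum_congr rfl fun μ hμ => ?_))
    have hμ' : N μ ≠ ⊥ := (Set.Finite.mem_toFinset hfin).mp hμ
    rcases hdich μ hμ' with h0 | h1
    · simp [h0, zero_pow hn.ne']
    · have habsn : ‖μ‖ ^ n = 1 := by rw [← norm_pow, h1, norm_one]
      have habs : ‖μ‖ = 1 := by
        by_contra hne
        rcases lt_or_gt_of_ne hne with hlt | hgt
        · exact absurd habsn (by nlinarith [pow_lt_one₀ (norm_nonneg μ) hlt hn.ne'])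
        · exact absurd habsn (by nlinarith [one_lt_pow₀ hgt hn.ne'])
      rw [norm_mul, habs, one_mul, h1, one_mul]
      simp
  refine ⟨key1, fun h hO => h ?_⟩
  rw [hO] at key1
  simp only [Complex.zero_re] at key1
  exact norm_eq_zero.mp (le_antisymm key1 (norm_nonneg _))

open Matrix in
lemma key_matrix {ι : Type} [Fintype ι] [DecidableEq ι] (F : Matrix ι ι ℂ) (n : ℕ)
    (hn : 0 < n) (hF : F ^ (n + 1) = F) :
    ‖F.trace‖ ≤ ((F ^ n).trace).re ∧ (F.trace ≠ 0 → (F ^ n).trace ≠ 0) := by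
  classical
  let b := Pi.basisFun ℂ ι
  let e := Matrix.toLinAlgEquiv b
  have htr : ∀ k : ℕ, LinearMap.trace ℂ (ι → ℂ) ((e F) ^ k) = (F ^ k).trace := by
    intro k
    rw [← map_pow, LinearMap.trace_eq_matrix_trace ℂ b]
    rw [show LinearMap.toMatrix b b (e (F ^ k)) = F ^ k from
      LinearMap.toMatrixAlgEquiv_toLinAlgEquiv b (F ^ k)]
  have hfe : (e F) ^ (n + 1) = e F := by rw [← map_pow, hF]
  have key := key_end (e F) n hn hfe
  rw [htr n] at key
  rwa [show LinearMap.trace ℂ (ι → ℂ) (e F) = F.trace by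
    have := htr 1; simpa using this] at key


lemma rep_of_char {Γ : Type} [Group Γ] {f : Γ → ℂ} (hf : IsIrrChar Γ f) :
    ∃ (d : ℕ) (r : Γ →* Matrix (Fin d) (Fin d) ℂ), ∀ x, f x = (r x).trace := by
  obtain ⟨V, -, rfl⟩ := hf
  let b := Module.finBasis ℂ V
  refine ⟨Module.finrank ℂ V,
    { toFun := fun x => LinearMap.toMatrix b b (V.ρ x)
      map_one' := by simp
      map_mul' := fun x y => by
        show LinearMap.toMatrix b b (V.ρ (x * y)) = _
        rw [map_mul, ← LinearMap.toMatrix_mul] }, fun x => ?_⟩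
  show FDRep.character V x = (LinearMap.toMatrix b b (V.ρ x)).trace
  rw [FDRep.character, LinearMap.trace_eq_matrix_trace ℂ b]

lemma trace_map_conj {ι : Type} [Fintype ι] (M : Matrix ι ι ℂ) :
    (M.map (starRingEnd ℂ)).trace = (starRingEnd ℂ) M.trace := by
  simp [Matrix.trace, Matrix.diag, Matrix.map_apply, map_sum]

open Kronecker in
lemma kron_pow {ι κ : Type} [Fintype ι] [Fintype κ] [DecidableEq ι] [DecidableEq κ]
    (A : Matrix ι ι ℂ) (B : Matrix κ κ ℂ) (k : ℕ) :
    (A ⊗ₖ B) ^ k = (A ^ k) ⊗ₖ (B ^ k) := by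
  induction k with
  | zero => simp [Matrix.one_kronecker_one]
  | succ k ih => rw [pow_succ, ih, pow_succ, pow_succ, Matrix.mul_kronecker_mul]

lemma my_sum_collapse {G : Type} [Group G] [Fintype G] {H : Subgroup G} [Fintype H]
    (t : MulAut G) (g0 : G) (A : G → ℂ) (B : H → ℂ)
    (hA : ∀ x w : G, A (x⁻¹ * w * t x) = A w) :
    (Fintype.card G : ℂ)⁻¹ * ∑ y : G, A y *
      (starRingEnd ℂ) ((Fintype.card H : ℂ)⁻¹ * ∑ x : G, ∑ h : H,
        if x * y * (t x)⁻¹ = (h : G) * g0 then B h else 0) =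
    (Fintype.card H : ℂ)⁻¹ * ∑ h : H, A ((h : G) * g0) * (starRingEnd ℂ) (B h) := by
  classical
  have hG0 : (Fintype.card G : ℂ) ≠ 0 := Nat.cast_ne_zero.mpr Fintype.card_ne_zero
  -- push the conjugation inside
  have step1 : ∀ y : G, A y *
      (starRingEnd ℂ) ((Fintype.card H : ℂ)⁻¹ * ∑ x : G, ∑ h : H,
        if x * y * (t x)⁻¹ = (h : G) * g0 then B h else 0) =
      (Fintype.card H : ℂ)⁻¹ * ∑ x : G, ∑ h : H,
        if x * y * (t x)⁻¹ = (h : G) * g0 then A y * (starRingEnd ℂ) (B h) else 0 := by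
    intro y
    rw [map_mul, map_inv₀, map_natCast, map_sum]
    simp_rw [map_sum, apply_ite (starRingEnd ℂ), map_zero]
    rw [mul_left_comm, Finset.mul_sum]
    congr 1
    refine Finset.sum_congr rfl fun x _ => ?_
    rw [Finset.mul_sum]
    refine Finset.sum_congr rfl fun h _ => ?_
    rw [mul_ite, mul_zero]
  simp_rw [step1]
  rw [← Finset.mul_sum, ← mul_assoc, mul_comm ((Fintype.card G : ℂ)⁻¹), mul_assoc]
  congr 1
  rw [Finset.sum_comm]
  have step2 : ∀ x : G, ∑ y : G, ∑ h : H,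
      (if x * y * (t x)⁻¹ = (h : G) * g0 then A y * (starRingEnd ℂ) (B h) else 0) =
      ∑ h : H, A ((h : G) * g0) * (starRingEnd ℂ) (B h) := by
    intro x
    rw [Finset.sum_comm]
    refine Finset.sum_congr rfl fun h _ => ?_
    rw [Finset.sum_eq_single (x⁻¹ * ((h : G) * g0) * t x)]
    · rw [if_pos (by group), hA]
    · intro y _ hy
      rw [if_neg]
      intro hc
      exact hy (by rw [← hc]; group)
    · intro hy; exact absurd (Finset.mem_univ _) hy
  simp_rw [step2]
  rw [Finset.sum_const, Finset.card_univ, nsmul_eq_mul, ← mul_assoc,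
    inv_mul_cancel₀ hG0, one_mul]

/-- let `G` be a finite group, `φ ∈ Aut(G)`, `H ≤ G` a subgroup and `g ∈ G` such
that `h ↦ g·φ(h)·g⁻¹` restricts to an automorphism `ψ` of `H`.  Let `χ̃` be an irreducible
character of `H⋊⟨ψ⟩` with irreducible restriction `χ` to `H`, and `ρ̃` an irreducible character
of `G⋊⟨φ⟩` with irreducible restriction `ρ` to `G`.  Then
`|⟨ρ̃, Ind_{H.gφ}^{G.φ}(χ̃)⟩_{G.φ}| ≤ ⟨ρ, Ind_H^G(χ)⟩_G`,
and in particular if the left side is nonzero then `⟨ρ, Ind_H^G(χ)⟩_G ≠ 0`.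
Here the coset `G.φ ⊆ G⋊⟨φ⟩` is parametrized by `G` via `x ↦ (x, φ)`, the coset
`H.gφ ⊆ H⋊⟨ψ⟩` by `H` via `h ↦ (h, ψ)`, the coset induction of `χ̃` has value
`|H|⁻¹ Σ_{x ∈ G, h ∈ H, x·y·φ(x)⁻¹ = h·g} χ̃(h, ψ)` at the coset element `(y, φ)`, and the
inner product over the coset is `|G|⁻¹ Σ_{y ∈ G} f(y,φ)·conj(f'(y,φ))`. -/
theorem stmt0 {G : Type} [Group G] [Fintype G] (φ : MulAut G)
    (H : Subgroup G) [Fintype H] (g : G)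
    (ψ : MulAut H) (hψ : ∀ h : H, ((ψ h : H) : G) = g * φ (h : G) * g⁻¹)
    (χt : (H ⋊[(Subgroup.zpowers ψ).subtype] (Subgroup.zpowers ψ)) → ℂ)
    (hχt : IsIrrChar _ χt)
    (hχ : IsIrrChar H (fun h : H =>
      χt ⟨h, (1 : Subgroup.zpowers ψ)⟩))
    (ρt : (G ⋊[(Subgroup.zpowers φ).subtype] (Subgroup.zpowers φ)) → ℂ)
    (hρt : IsIrrChar _ ρt)
    (hρ : IsIrrChar G (fun x : G =>
      ρt ⟨x, (1 : Subgroup.zpowers φ)⟩)) :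
    ‖((Fintype.card G : ℂ)⁻¹ * ∑ y : G,
        ρt ⟨y, ⟨φ, Subgroup.mem_zpowers φ⟩⟩ *
        (starRingEnd ℂ) ((Fintype.card H : ℂ)⁻¹ * ∑ x : G, ∑ h : H,
          if x * y * (φ x)⁻¹ = (h : G) * g
          then χt ⟨h, ⟨ψ, Subgroup.mem_zpowers ψ⟩⟩ else 0))‖ ≤
      ((Fintype.card G : ℂ)⁻¹ * ∑ y : G,
        ρt ⟨y, (1 : Subgroup.zpowers φ)⟩ *
        (starRingEnd ℂ) ((Fintype.card H : ℂ)⁻¹ * ∑ x : G, ∑ h : H,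
          if x * y * x⁻¹ = (h : G)
          then χt ⟨h, (1 : Subgroup.zpowers ψ)⟩ else 0)).re ∧
    (((Fintype.card G : ℂ)⁻¹ * ∑ y : G,
        ρt ⟨y, ⟨φ, Subgroup.mem_zpowers φ⟩⟩ *
        (starRingEnd ℂ) ((Fintype.card H : ℂ)⁻¹ * ∑ x : G, ∑ h : H,
          if x * y * (φ x)⁻¹ = (h : G) * g
          then χt ⟨h, ⟨ψ, Subgroup.mem_zpowers ψ⟩⟩ else 0)) ≠ 0 →
      ((Fintype.card G : ℂ)⁻¹ * ∑ y : G,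
        ρt ⟨y, (1 : Subgroup.zpowers φ)⟩ *
        (starRingEnd ℂ) ((Fintype.card H : ℂ)⁻¹ * ∑ x : G, ∑ h : H,
          if x * y * x⁻¹ = (h : G)
          then χt ⟨h, (1 : Subgroup.zpowers ψ)⟩ else 0)) ≠ 0) := by
  classical
  obtain ⟨d₁, p, hp⟩ := rep_of_char hρt
  obtain ⟨d₂, q, hq⟩ := rep_of_char hχt
  haveI finΓ : Finite (G ⋊[(Subgroup.zpowers φ).subtype] (Subgroup.zpowers φ)) :=
    Finite.of_injective (fun x => (x.left, x.right))
      (fun a b hab => SemidirectProduct.ext (congrArg Prod.fst hab) (congrArg Prod.snd hab))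
  haveI finΔ : Finite (H ⋊[(Subgroup.zpowers ψ).subtype] (Subgroup.zpowers ψ)) :=
    Finite.of_injective (fun x => (x.left, x.right))
      (fun a b hab => SemidirectProduct.ext (congrArg Prod.fst hab) (congrArg Prod.snd hab))
  set φ' : Subgroup.zpowers φ := ⟨φ, Subgroup.mem_zpowers φ⟩ with hφ'
  set ψ' : Subgroup.zpowers ψ := ⟨ψ, Subgroup.mem_zpowers ψ⟩ with hψ'
  set u : G ⋊[(Subgroup.zpowers φ).subtype] (Subgroup.zpowers φ) := ⟨g, φ'⟩ with hu
  set v : H ⋊[(Subgroup.zpowers ψ).subtype] (Subgroup.zpowers ψ) := ⟨1, ψ'⟩ with hv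
  set q' : (H ⋊[(Subgroup.zpowers ψ).subtype] (Subgroup.zpowers ψ)) →*
      Matrix (Fin d₂) (Fin d₂) ℂ :=
    ((starRingEnd ℂ).mapMatrix.toMonoidHom).comp q with hq'def
  have hq' : ∀ z, (starRingEnd ℂ) (χt z) = (q' z).trace := fun z => by
    rw [hq z, ← trace_map_conj]; rfl
  set R : H → Matrix (Fin d₁ × Fin d₂) (Fin d₁ × Fin d₂) ℂ :=
    fun h => Matrix.kroneckerMap (· * ·) (p (SemidirectProduct.inl (h : G)))
      (q' (SemidirectProduct.inl h)) with hR
  set c : Matrix (Fin d₁ × Fin d₂) (Fin d₁ × Fin d₂) ℂ :=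
    Matrix.kroneckerMap (· * ·) (p u) (q' v) with hc
  set E : Matrix (Fin d₁ × Fin d₂) (Fin d₁ × Fin d₂) ℂ :=
    (Fintype.card H : ℂ)⁻¹ • ∑ h : H, R h with hE
  have hH0 : (Fintype.card H : ℂ) ≠ 0 := Nat.cast_ne_zero.mpr Fintype.card_ne_zero
  have hRmul : ∀ h k : H, R h * R k = R (h * k) := fun h k => by
    simp only [hR, Subgroup.coe_mul, map_mul, Matrix.mul_kronecker_mul]
  have hsum : (∑ h : H, R h) * (∑ k : H, R k) = (Fintype.card H : ℂ) • ∑ k : H, R k := by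
    rw [Finset.sum_mul_sum]
    have h1 : ∀ h : H, ∑ k : H, R h * R k = ∑ k : H, R k := fun h =>
      Fintype.sum_equiv (Equiv.mulLeft h) _ R (fun k => by rw [hRmul]; rfl)
    calc ∑ h : H, ∑ k : H, R h * R k = ∑ _h : H, ∑ k : H, R k :=
          Finset.sum_congr rfl fun h _ => h1 h
      _ = (Fintype.card H : ℂ) • ∑ k : H, R k := by
          rw [Finset.sum_const, Finset.card_univ, ← Nat.cast_smul_eq_nsmul ℂ]
  have hE2 : E * E = E := by
    rw [hE, Matrix.smul_mul, Matrix.mul_smul, hsum, smul_smul, smul_smul]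
    congr 1
    field_simp
  have key_g : ∀ h : H, u * SemidirectProduct.inl (h : G) =
      SemidirectProduct.inl ((ψ h : H) : G) * u := by
    intro h
    refine SemidirectProduct.ext ?_ ?_
    · simp [hu, hφ', hψ h, mul_assoc]
    · simp [hu]
  have key_v : ∀ h : H, v * SemidirectProduct.inl h = SemidirectProduct.inl (ψ h) * v := by
    intro h
    refine SemidirectProduct.ext ?_ ?_
    · simp [hv, hψ']
    · simp [hv]
  have hcR : ∀ h : H, c * R h = R (ψ h) * c := by
    intro h
    rw [hc, hR]
    dsimp only
    rw [← Matrix.mul_kronecker_mul, ← map_mul, ← map_mul, key_g h, key_v h,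
      map_mul, map_mul, Matrix.mul_kronecker_mul]
  have hcE : c * E = E * c := by
    rw [hE, Matrix.mul_smul, Matrix.smul_mul]
    congr 1
    rw [Finset.mul_sum, Finset.sum_mul]
    exact Fintype.sum_equiv ψ.toEquiv _ _ (fun h => by rw [hcR h]; rfl)
  set m : ℕ := orderOf u * orderOf v with hm_def
  have hm : 0 < m := Nat.mul_pos (orderOf_pos u) (orderOf_pos v)
  have hu_pow : u ^ m = 1 := by rw [hm_def, pow_mul, pow_orderOf_eq_one, one_pow]
  have hv_pow : v ^ m = 1 := by rw [hm_def, pow_mul', pow_orderOf_eq_one, one_pow]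
  have hcpow : c ^ m = 1 := by
    rw [hc, kron_pow, ← map_pow, ← map_pow, hu_pow, hv_pow, map_one, map_one,
      Matrix.one_kronecker_one]
  have hEpow : ∀ k : ℕ, E ^ (k + 1) = E := by
    intro k; induction k with
    | zero => rw [pow_one]
    | succ k ih => rw [pow_succ, ih, hE2]
  have hEc : Commute E c := hcE.symm
  have hFn : (E * c) ^ m = E := by
    rw [hEc.mul_pow, hcpow, mul_one, ← Nat.succ_pred_eq_of_pos hm, hEpow]
  have hFn1 : (E * c) ^ (m + 1) = E * c := by
    rw [hEc.mul_pow, pow_succ c, hcpow, one_mul, hEpow]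
  have key := key_matrix (E * c) m hm hFn1
  rw [hFn] at key
  -- identify the left-hand sum
  have hAL : ∀ x w : G, ρt ⟨x⁻¹ * w * φ x, φ'⟩ = ρt ⟨w, φ'⟩ := by
    intro x w
    have e1 : (⟨x⁻¹ * w * φ x, φ'⟩ :
        G ⋊[(Subgroup.zpowers φ).subtype] (Subgroup.zpowers φ)) =
        SemidirectProduct.inl x⁻¹ * (⟨w, φ'⟩ * SemidirectProduct.inl x) := by
      refine SemidirectProduct.ext ?_ ?_ <;> simp [mul_assoc, hφ']
    have e2 : ((⟨w, φ'⟩ : G ⋊[(Subgroup.zpowers φ).subtype] (Subgroup.zpowers φ)) *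
        SemidirectProduct.inl x) * SemidirectProduct.inl x⁻¹ = ⟨w, φ'⟩ := by
      rw [mul_assoc, ← map_mul, mul_inv_cancel, map_one, mul_one]
    rw [hp, hp, e1, map_mul, Matrix.trace_mul_comm, ← map_mul, e2]
  have hAR : ∀ x w : G, ρt ⟨x⁻¹ * w * x, 1⟩ = ρt ⟨w, 1⟩ := by
    intro x w
    rw [hp, hp]
    show (p (SemidirectProduct.inl (x⁻¹ * w * x))).trace = _
    rw [mul_assoc, map_mul, map_mul, Matrix.trace_mul_comm, ← map_mul, ← map_mul,
      mul_assoc, mul_inv_cancel, mul_one]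
    rfl
  have hLeq : ((Fintype.card G : ℂ)⁻¹ * ∑ y : G,
        ρt ⟨y, ⟨φ, Subgroup.mem_zpowers φ⟩⟩ *
        (starRingEnd ℂ) ((Fintype.card H : ℂ)⁻¹ * ∑ x : G, ∑ h : H,
          if x * y * (φ x)⁻¹ = (h : G) * g
          then χt ⟨h, ⟨ψ, Subgroup.mem_zpowers ψ⟩⟩ else 0)) = (E * c).trace := by
    rw [my_sum_collapse φ g (fun y => ρt ⟨y, φ'⟩) (fun h => χt ⟨h, ψ'⟩) hAL]
    have e3 : ∀ h : H, ρt ⟨(h : G) * g, φ'⟩ * (starRingEnd ℂ) (χt ⟨h, ψ'⟩) =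
        (R h * c).trace := by
      intro h
      have eh1 : (⟨(h : G) * g, φ'⟩ :
          G ⋊[(Subgroup.zpowers φ).subtype] (Subgroup.zpowers φ)) =
          SemidirectProduct.inl (h : G) * u := by
        refine SemidirectProduct.ext ?_ ?_ <;> simp [hu]
      have eh2 : (⟨h, ψ'⟩ : H ⋊[(Subgroup.zpowers ψ).subtype] (Subgroup.zpowers ψ)) =
          SemidirectProduct.inl h * v := by
        refine SemidirectProduct.ext ?_ ?_ <;> simp [hv]
      rw [hp, hq', eh1, eh2, map_mul, map_mul, hR, hc]
      dsimp only
      rw [← Matrix.trace_kronecker, Matrix.mul_kronecker_mul]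
    simp_rw [e3]
    rw [hE, Matrix.smul_mul, Matrix.trace_smul, Finset.sum_mul, Matrix.trace_sum,
      smul_eq_mul]
  have hReq : ((Fintype.card G : ℂ)⁻¹ * ∑ y : G,
        ρt ⟨y, (1 : Subgroup.zpowers φ)⟩ *
        (starRingEnd ℂ) ((Fintype.card H : ℂ)⁻¹ * ∑ x : G, ∑ h : H,
          if x * y * x⁻¹ = (h : G)
          then χt ⟨h, (1 : Subgroup.zpowers ψ)⟩ else 0)) = E.trace := by
    have h1 := my_sum_collapse (G := G) (H := H) 1 1 (fun y => ρt ⟨y, 1⟩)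
      (fun h => χt ⟨h, 1⟩) (fun x w => by simpa using hAR x w)
    simp only [MulAut.one_apply, mul_one] at h1
    rw [h1]
    have e4 : ∀ h : H, ρt ⟨(h : G), 1⟩ * (starRingEnd ℂ) (χt ⟨h, 1⟩) = (R h).trace := by
      intro h
      rw [hp, hq', hR]
      show (p (SemidirectProduct.inl (h : G))).trace * (q' (SemidirectProduct.inl h)).trace = _
      rw [← Matrix.trace_kronecker]
    simp_rw [e4]
    rw [hE, Matrix.trace_smul, Matrix.trace_sum, smul_eq_mul]
  rw [hLeq, hReq]
  exact key
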